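/- Consider nested constrained population least squares problems with Γ₁ ⊇ Γ₂, Δ₁ ⊇ Δ₂, and U(Γ₁) = U(Δ₁) (the unconstrained coordinate sets of Γ₁ and Δ₁ coincide). Let Vₖ = E[(A−π)²εₖ²]/(π²(1−π)²) and let the corrected variances be Ṽₖ = Vₖ + δₖᵀΣ(2δ_f − δₖ), where δ_f is the interaction coefficient of the fully unconstrained problem. Then Ṽ₂ − Ṽ₁ = (1/(π(1−π))) (d_γ + (1−π)d_δ)ᵀΣ(d_γ + (1−π)d_δ) ≥ 0, where d_γ = γ₁−γ₂, d_δ = δ₁−δ₂. -/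

import Mathlib

open MeasureTheory ProbabilityTheory Matrix

/-- Two `L²` functions have an integrable product. -/
theorem stmt8_mulL2 {Ω : Type*} [MeasurableSpace Ω] {μ : Measure Ω}
    {f g : Ω → ℝ} (hf : MemLp f 2 μ) (hg : MemLp g 2 μ) :
    Integrable (fun ω => f ω * g ω) μ := by
  have h := hg.smul (φ := f) hf (r := 1)
  have := memLp_one_iff_integrable.mp h
  simpa [smul_eq_mul, Pi.mul_def] using this

/-- A linear combination of `L²` functions is in `L²`. -/
theorem stmt8_sumL2 {Ω : Type*} [MeasurableSpace Ω] {μ : Measure Ω} {n : ℕ}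
    {X : Ω → Fin n → ℝ} (hXL2 : ∀ j, MemLp (fun ω => X ω j) 2 μ) (c : Fin n → ℝ) :
    MemLp (fun ω => ∑ j, c j * X ω j) 2 μ := by
  have h := memLp_finset_sum (μ := μ) (p := 2) (f := fun j ω => c j * X ω j)
    Finset.univ (fun j _ => (hXL2 j).const_mul (c j))
  simpa using h

/-- Weighted integral of a product of two linear combinations. -/
theorem stmt8_aux_quad {Ω : Type*} [MeasurableSpace Ω] {μ : Measure Ω} {n : ℕ}
    {X : Ω → Fin n → ℝ}
    (hXX : ∀ j k, Integrable (fun ω => X ω j * X ω k) μ)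
    {W : Ω → ℝ} (hWesm : AEStronglyMeasurable W μ) (hWbd : ∀ ω, ‖W ω‖ ≤ 1)
    {S : Matrix (Fin n) (Fin n) ℝ} {κ : ℝ}
    (hval : ∀ j k, ∫ ω, W ω * (X ω j * X ω k) ∂μ = κ * S j k)
    (c d : Fin n → ℝ) :
    ∫ ω, W ω * ((∑ j, c j * X ω j) * (∑ k, d k * X ω k)) ∂μ
      = κ * ∑ j, ∑ k, c j * (S j k * d k) := by
  have hWmul : ∀ {f : Ω → ℝ}, Integrable f μ → Integrable (fun ω => W ω * f ω) μ :=
    fun hf => hf.bdd_mul hWesm (Filter.Eventually.of_forall hWbd)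
  have hpt : ∀ ω, W ω * ((∑ j, c j * X ω j) * (∑ k, d k * X ω k))
      = ∑ j, ∑ k, c j * (d k * (W ω * (X ω j * X ω k))) := by
    intro ω
    rw [Finset.sum_mul_sum, Finset.mul_sum]
    refine Finset.sum_congr rfl fun j _ => ?_
    rw [Finset.mul_sum]
    exact Finset.sum_congr rfl fun k _ => by ring
  rw [integral_congr_ae (Filter.Eventually.of_forall hpt),
    integral_finset_sum _ (fun j _ => integrable_finset_sum _
      (fun k _ => ((hWmul (hXX j k)).const_mul (d k)).const_mul (c j))),
    Finset.mul_sum]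
  refine Finset.sum_congr rfl fun j _ => ?_
  rw [integral_finset_sum _ (fun k _ => ((hWmul (hXX j k)).const_mul (d k)).const_mul (c j)),
    Finset.mul_sum]
  refine Finset.sum_congr rfl fun k _ => ?_
  rw [integral_const_mul, integral_const_mul, hval j k]; ring

/-- Weighted cross-term integral vanishes. -/
theorem stmt8_aux_zero {Ω : Type*} [MeasurableSpace Ω] {μ : Measure Ω} {n : ℕ}
    {X : Ω → Fin n → ℝ} {ε : Ω → ℝ}
    (hεX : ∀ j, Integrable (fun ω => ε ω * X ω j) μ)
    {W : Ω → ℝ} (hWesm : AEStronglyMeasurable W μ) (hWbd : ∀ ω, ‖W ω‖ ≤ 1)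
    {U : Set (Fin n)} (hval : ∀ j ∈ U, ∫ ω, W ω * (ε ω * X ω j) ∂μ = 0)
    (c : Fin n → ℝ) (hc : ∀ j ∉ U, c j = 0) :
    ∫ ω, W ω * (ε ω * ∑ j, c j * X ω j) ∂μ = 0 := by
  have hpt : ∀ ω, W ω * (ε ω * ∑ j, c j * X ω j)
      = ∑ j, c j * (W ω * (ε ω * X ω j)) := by
    intro ω; rw [Finset.mul_sum, Finset.mul_sum]
    exact Finset.sum_congr rfl fun j _ => by ring
  rw [integral_congr_ae (Filter.Eventually.of_forall hpt),
    integral_finset_sum _ (fun j _ => (((hεX j).bdd_mul hWesm (Filter.Eventually.of_forall hWbd))).const_mul (c j))]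
  refine Finset.sum_eq_zero fun j _ => ?_
  rw [integral_const_mul]
  by_cases hj : j ∈ U
  · rw [hval j hj, mul_zero]
  · rw [hc j hj, zero_mul]

/-- Theorem 2 of the paper: nested constrained population least squares
problems with `Γ₁ ⊇ Γ₂`, `Δ₁ ⊇ Δ₂` and `U(Γ₁) = U(Δ₁) = U`.  `ε_f` is the residual of the
fully unconstrained fit (interaction coefficient `δf`), `ε₁, ε₂` the residuals of the two
constrained fits with coefficients `(γ₁,δ₁)`, `(γ₂,δ₂)`; orthogonality (first-order)
conditions are recorded as hypotheses.  With `Vₖ = E[(A-π)²εₖ²]/(π²(1-π)²)` and corrected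
variances `Ṽₖ = Vₖ + δₖᵀΣ(2δf - δₖ)`, one has
`Ṽ₂ - Ṽ₁ = (1/(π(1-π))) (d_γ + (1-π)d_δ)ᵀΣ(d_γ + (1-π)d_δ) ≥ 0`
where `d_γ = γ₁ - γ₂`, `d_δ = δ₁ - δ₂`. -/
theorem stmt_8 {Ω : Type*} [MeasurableSpace Ω] (μ : Measure Ω) [IsProbabilityMeasure μ]
    {p : ℕ} (π : ℝ) (hπ0 : 0 < π) (hπ1 : π < 1)
    (A : Ω → ℝ) (X : Ω → Fin p → ℝ)
    (hA01 : ∀ ω, A ω = 0 ∨ A ω = 1)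
    (hAmean : ∫ ω, A ω ∂μ = π)
    (hindep : IndepFun A X μ)
    (hXmean : ∀ j, ∫ ω, X ω j ∂μ = 0)
    (hXL2 : ∀ j, MemLp (fun ω => X ω j) 2 μ)
    (S : Matrix (Fin p) (Fin p) ℝ)
    (hS : ∀ j k, S j k = ∫ ω, X ω j * X ω k ∂μ) (hSpd : S.PosDef)
    -- the common unconstrained coordinate set U = U(Γ₁) = U(Δ₁)
    (U : Set (Fin p))
    (γf δf γ₁ γ₂ δ₁ δ₂ : Fin p → ℝ) (εf ε₁ ε₂ : Ω → ℝ)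
    (hεfL2 : MemLp εf 2 μ) (hε₁L2 : MemLp ε₁ 2 μ)
    -- first-order conditions of the fully unconstrained fit
    (hf0 : ∫ ω, εf ω ∂μ = 0) (hfA : ∫ ω, εf ω * A ω ∂μ = 0)
    (hfX : ∀ j, ∫ ω, εf ω * X ω j ∂μ = 0)
    (hfAX : ∀ j, ∫ ω, εf ω * A ω * X ω j ∂μ = 0)
    -- first-order conditions of the first constrained fit
    (h10 : ∫ ω, ε₁ ω ∂μ = 0) (h1A : ∫ ω, ε₁ ω * A ω ∂μ = 0)
    (h1X : ∀ j ∈ U, ∫ ω, ε₁ ω * X ω j ∂μ = 0)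
    (h1AX : ∀ j ∈ U, ∫ ω, ε₁ ω * A ω * X ω j ∂μ = 0)
    -- residual relationships
    (hε₁ : ∀ ω, ε₁ ω = εf ω + (∑ j, (γf j - γ₁ j) * X ω j)
        + A ω * ∑ j, (δf j - δ₁ j) * X ω j)
    (hε₂ : ∀ ω, ε₂ ω = ε₁ ω + (∑ j, (γ₁ j - γ₂ j) * X ω j)
        + A ω * ∑ j, (δ₁ j - δ₂ j) * X ω j)
    -- nesting: the coefficient differences are supported on U
    (hsuppγ : ∀ j ∉ U, γ₁ j = γ₂ j) (hsuppδ : ∀ j ∉ U, δ₁ j = δ₂ j) :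
    ((∫ ω, (A ω - π) ^ 2 * ε₂ ω ^ 2 ∂μ) / (π ^ 2 * (1 - π) ^ 2)
        + δ₂ ⬝ᵥ (S *ᵥ ((2 : ℝ) • δf - δ₂)))
      - ((∫ ω, (A ω - π) ^ 2 * ε₁ ω ^ 2 ∂μ) / (π ^ 2 * (1 - π) ^ 2)
        + δ₁ ⬝ᵥ (S *ᵥ ((2 : ℝ) • δf - δ₁)))
      = (1 / (π * (1 - π))) *
        (((γ₁ - γ₂) + (1 - π) • (δ₁ - δ₂)) ⬝ᵥ (S *ᵥ ((γ₁ - γ₂) + (1 - π) • (δ₁ - δ₂)))) ∧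
    ((∫ ω, (A ω - π) ^ 2 * ε₁ ω ^ 2 ∂μ) / (π ^ 2 * (1 - π) ^ 2)
        + δ₁ ⬝ᵥ (S *ᵥ ((2 : ℝ) • δf - δ₁)))
      ≤ ((∫ ω, (A ω - π) ^ 2 * ε₂ ω ^ 2 ∂μ) / (π ^ 2 * (1 - π) ^ 2)
        + δ₂ ⬝ᵥ (S *ᵥ ((2 : ℝ) • δf - δ₂))) := by
  have hπ1' : (0:ℝ) < 1 - π := by linarith
  -- basic facts about A
  have hAint : Integrable A μ := by
    by_contra h
    rw [integral_undef h] at hAmean; exact absurd hAmean (by linarith)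
  have hAesm : AEStronglyMeasurable A μ := hAint.aestronglyMeasurable
  have hAbd : ∀ ω, ‖A ω‖ ≤ 1 := fun ω => by rcases hA01 ω with h | h <;> simp [h]
  have hwesm : AEStronglyMeasurable (fun ω => (A ω - π) ^ 2) μ := by
    have h1 : AEStronglyMeasurable (fun ω => A ω - π) μ :=
      hAesm.sub (aestronglyMeasurable_const (b := π))
    have := h1.mul h1
    simpa [pow_two, Pi.mul_def] using this
  have hwbd : ∀ ω, ‖(A ω - π) ^ 2‖ ≤ 1 := by
    intro ω
    rcases hA01 ω with h | h <;> rw [h] <;>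
      rw [Real.norm_eq_abs, abs_of_nonneg (sq_nonneg _)] <;> nlinarith
  have hwAesm : AEStronglyMeasurable (fun ω => (A ω - π) ^ 2 * A ω) μ := hwesm.mul hAesm
  have hwAbd : ∀ ω, ‖(A ω - π) ^ 2 * A ω‖ ≤ 1 := by
    intro ω
    rcases hA01 ω with h | h <;> rw [h]
    · simp
    · rw [mul_one, Real.norm_eq_abs, abs_of_nonneg (sq_nonneg _)]; nlinarith
  -- integrability helpers
  have hWmul : ∀ {f : Ω → ℝ}, Integrable f μ → Integrable (fun ω => (A ω - π) ^ 2 * f ω) μ :=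
    fun hf => hf.bdd_mul hwesm (Filter.Eventually.of_forall hwbd)
  have hWAmul : ∀ {f : Ω → ℝ},
      Integrable f μ → Integrable (fun ω => (A ω - π) ^ 2 * A ω * f ω) μ :=
    fun hf => hf.bdd_mul hwAesm (Filter.Eventually.of_forall hwAbd)
  have hAmul : ∀ {f : Ω → ℝ}, Integrable f μ → Integrable (fun ω => A ω * f ω) μ :=
    fun hf => hf.bdd_mul hAesm (Filter.Eventually.of_forall hAbd)
  have hXX : ∀ j k, Integrable (fun ω => X ω j * X ω k) μ :=
    fun j k => stmt8_mulL2 (hXL2 j) (hXL2 k)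
  have hε₁X : ∀ j, Integrable (fun ω => ε₁ ω * X ω j) μ := fun j => stmt8_mulL2 hε₁L2 (hXL2 j)
  have hεfX : ∀ j, Integrable (fun ω => εf ω * X ω j) μ := fun j => stmt8_mulL2 hεfL2 (hXL2 j)
  have hε₁AX : ∀ j, Integrable (fun ω => ε₁ ω * A ω * X ω j) μ :=
    fun j => (hAmul (hε₁X j)).congr (Filter.Eventually.of_forall fun ω => by ring)
  have hεfAX : ∀ j, Integrable (fun ω => εf ω * A ω * X ω j) μ :=
    fun j => (hAmul (hεfX j)).congr (Filter.Eventually.of_forall fun ω => by ring)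
  -- symmetry of S
  have Ssym : ∀ j k, S j k = S k j := by
    intro j k
    rw [hS, hS]
    exact integral_congr_ae (Filter.Eventually.of_forall fun ω => mul_comm _ _)
  -- key independence computation
  have hAXX : ∀ j k, ∫ ω, A ω * (X ω j * X ω k) ∂μ = π * S j k := by
    intro j k
    have hind : IndepFun A (fun ω => X ω j * X ω k) μ :=
      hindep.comp measurable_id ((measurable_pi_apply j).mul (measurable_pi_apply k))
    have h2 := hind.integral_mul_eq_mul_integral hAint.aestronglyMeasurable
      (hXX j k).aestronglyMeasurable
    simpa [Pi.mul_apply, hAmean, ← hS j k] using h2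
  have hwXX : ∀ j k, ∫ ω, (A ω - π) ^ 2 * (X ω j * X ω k) ∂μ = π * (1 - π) * S j k := by
    intro j k
    have hpt : ∀ ω, (A ω - π) ^ 2 * (X ω j * X ω k)
        = (1 - 2 * π) * (A ω * (X ω j * X ω k)) + π ^ 2 * (X ω j * X ω k) := by
      intro ω; rcases hA01 ω with h | h <;> rw [h] <;> ring
    rw [integral_congr_ae (Filter.Eventually.of_forall hpt),
      integral_add ((hAmul (hXX j k)).const_mul _) ((hXX j k).const_mul _),
      integral_const_mul, integral_const_mul, hAXX, ← hS]
    ring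
  have hwAXX : ∀ j k,
      ∫ ω, (A ω - π) ^ 2 * A ω * (X ω j * X ω k) ∂μ = π * (1 - π) ^ 2 * S j k := by
    intro j k
    have hpt : ∀ ω, (A ω - π) ^ 2 * A ω * (X ω j * X ω k)
        = (1 - π) ^ 2 * (A ω * (X ω j * X ω k)) := by
      intro ω; rcases hA01 ω with h | h <;> rw [h] <;> ring
    rw [integral_congr_ae (Filter.Eventually.of_forall hpt), integral_const_mul, hAXX j k]
    ring
  -- scalar expansion helper
  have hscal : ∀ (c : Fin p → ℝ) ω (j : Fin p),
      (∑ k, c k * X ω k) * X ω j = ∑ k, c k * (X ω k * X ω j) := by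
    intro c ω j; rw [Finset.sum_mul]
    exact Finset.sum_congr rfl fun k _ => by ring
  -- Step A : the unconstrained-fit relations on U
  have hexp1 : ∀ j, ∫ ω, ε₁ ω * X ω j ∂μ
      = (∑ k, S j k * (γf k - γ₁ k)) + π * ∑ k, S j k * (δf k - δ₁ k) := by
    intro j
    have hpt : ∀ ω, ε₁ ω * X ω j = εf ω * X ω j
        + (∑ k, (γf k - γ₁ k) * (X ω k * X ω j))
        + ∑ k, (δf k - δ₁ k) * (A ω * (X ω k * X ω j)) := by
      intro ω
      rw [hε₁ ω]
      rcases hA01 ω with h | h <;> rw [h]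
      · simp only [zero_mul, mul_zero, add_zero, Finset.sum_const_zero]
        rw [add_mul, hscal]
      · simp only [one_mul]
        rw [add_mul, add_mul, hscal, hscal]
    have ib : Integrable (fun ω => ∑ k, (γf k - γ₁ k) * (X ω k * X ω j)) μ :=
      integrable_finset_sum _ (fun k _ => (hXX k j).const_mul (γf k - γ₁ k))
    have ic : Integrable (fun ω => ∑ k, (δf k - δ₁ k) * (A ω * (X ω k * X ω j))) μ :=
      integrable_finset_sum _ (fun k _ => (hAmul (hXX k j)).const_mul (δf k - δ₁ k))
    have iab : Integrable
        (fun ω => εf ω * X ω j + ∑ k, (γf k - γ₁ k) * (X ω k * X ω j)) μ := (hεfX j).add ib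
    rw [integral_congr_ae (Filter.Eventually.of_forall hpt),
      integral_add iab ic,
      integral_add (hεfX j) ib,
      integral_finset_sum _ (fun k _ => (hXX k j).const_mul (γf k - γ₁ k)),
      integral_finset_sum _ (fun k _ => (hAmul (hXX k j)).const_mul (δf k - δ₁ k)), hfX j]
    simp only [integral_const_mul, hAXX]
    rw [zero_add, Finset.mul_sum]
    congr 1
    · exact Finset.sum_congr rfl fun k _ => by rw [← hS k j, Ssym j k]; ring
    · exact Finset.sum_congr rfl fun k _ => by rw [Ssym j k]; ring
  have hexp2 : ∀ j, ∫ ω, ε₁ ω * A ω * X ω j ∂μ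
      = π * (∑ k, S j k * (γf k - γ₁ k)) + π * ∑ k, S j k * (δf k - δ₁ k) := by
    intro j
    have hpt : ∀ ω, ε₁ ω * A ω * X ω j = εf ω * A ω * X ω j
        + (∑ k, (γf k - γ₁ k) * (A ω * (X ω k * X ω j)))
        + ∑ k, (δf k - δ₁ k) * (A ω * (X ω k * X ω j)) := by
      intro ω
      rcases hA01 ω with h | h
      · rw [h]; simp
      · rw [hε₁ ω, h]
        simp only [mul_one, one_mul]
        rw [add_mul, add_mul, hscal, hscal]
    have ib : Integrable (fun ω => ∑ k, (γf k - γ₁ k) * (A ω * (X ω k * X ω j))) μ :=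
      integrable_finset_sum _ (fun k _ => (hAmul (hXX k j)).const_mul (γf k - γ₁ k))
    have ic : Integrable (fun ω => ∑ k, (δf k - δ₁ k) * (A ω * (X ω k * X ω j))) μ :=
      integrable_finset_sum _ (fun k _ => (hAmul (hXX k j)).const_mul (δf k - δ₁ k))
    have iab : Integrable
        (fun ω => εf ω * A ω * X ω j + ∑ k, (γf k - γ₁ k) * (A ω * (X ω k * X ω j))) μ :=
      (hεfAX j).add ib
    rw [integral_congr_ae (Filter.Eventually.of_forall hpt),
      integral_add iab ic,
      integral_add (hεfAX j) ib,
      integral_finset_sum _ (fun k _ => (hAmul (hXX k j)).const_mul (γf k - γ₁ k)),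
      integral_finset_sum _ (fun k _ => (hAmul (hXX k j)).const_mul (δf k - δ₁ k)), hfAX j]
    simp only [integral_const_mul, hAXX]
    rw [zero_add, Finset.mul_sum, Finset.mul_sum]
    congr 1
    · exact Finset.sum_congr rfl fun k _ => by rw [Ssym j k]; ring
    · exact Finset.sum_congr rfl fun k _ => by rw [Ssym j k]; ring
  have hPb0 : ∀ j ∈ U, (∑ k, S j k * (δf k - δ₁ k)) = 0 := by
    intro j hj
    have e1 := hexp1 j; rw [h1X j hj] at e1
    have e2 := hexp2 j; rw [h1AX j hj] at e2
    have hPa : (∑ k, S j k * (γf k - γ₁ k)) * (1 - π) = 0 := by linear_combination e2 - e1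
    have hPa0 : (∑ k, S j k * (γf k - γ₁ k)) = 0 := by
      rcases mul_eq_zero.mp hPa with h | h
      · exact h
      · exact absurd h (by intro h'; linarith)
    have h5 : π * (∑ k, S j k * (δf k - δ₁ k)) = 0 := by linear_combination -e1 - hPa0
    rcases mul_eq_zero.mp h5 with h | h
    · exact absurd h (ne_of_gt hπ0)
    · exact h
  -- zero cross-term integrals
  have hwε₁X : ∀ j ∈ U, ∫ ω, (A ω - π) ^ 2 * (ε₁ ω * X ω j) ∂μ = 0 := by
    intro j hj
    have hpt : ∀ ω, (A ω - π) ^ 2 * (ε₁ ω * X ω j)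
        = (1 - 2 * π) * (ε₁ ω * A ω * X ω j) + π ^ 2 * (ε₁ ω * X ω j) := by
      intro ω; rcases hA01 ω with h | h <;> rw [h] <;> ring
    rw [integral_congr_ae (Filter.Eventually.of_forall hpt),
      integral_add ((hε₁AX j).const_mul _) ((hε₁X j).const_mul _),
      integral_const_mul, integral_const_mul, h1AX j hj, h1X j hj]
    ring
  have hwAε₁X : ∀ j ∈ U, ∫ ω, (A ω - π) ^ 2 * A ω * (ε₁ ω * X ω j) ∂μ = 0 := by
    intro j hj
    have hpt : ∀ ω, (A ω - π) ^ 2 * A ω * (ε₁ ω * X ω j)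
        = (1 - π) ^ 2 * (ε₁ ω * A ω * X ω j) := by
      intro ω; rcases hA01 ω with h | h <;> rw [h] <;> ring
    rw [integral_congr_ae (Filter.Eventually.of_forall hpt),
      integral_const_mul, h1AX j hj, mul_zero]
  -- the six-term pointwise expansion
  have h6 : ∀ ω, (A ω - π) ^ 2 * ε₂ ω ^ 2 =
      (A ω - π) ^ 2 * ε₁ ω ^ 2
      + 2 * ((A ω - π) ^ 2 * (ε₁ ω * ∑ j, (γ₁ j - γ₂ j) * X ω j))
      + 2 * ((A ω - π) ^ 2 * A ω * (ε₁ ω * ∑ j, (δ₁ j - δ₂ j) * X ω j))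
      + (A ω - π) ^ 2 * ((∑ j, (γ₁ j - γ₂ j) * X ω j) * (∑ k, (γ₁ k - γ₂ k) * X ω k))
      + 2 * ((A ω - π) ^ 2 * A ω *
          ((∑ j, (γ₁ j - γ₂ j) * X ω j) * (∑ k, (δ₁ k - δ₂ k) * X ω k)))
      + (A ω - π) ^ 2 * A ω *
          ((∑ j, (δ₁ j - δ₂ j) * X ω j) * (∑ k, (δ₁ k - δ₂ k) * X ω k)) := by
    intro ω; rw [hε₂ ω]; rcases hA01 ω with h | h <;> rw [h] <;> ring
  -- integrability of the six pieces
  have hs1 : MemLp (fun ω => ∑ j, (γ₁ j - γ₂ j) * X ω j) 2 μ :=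
    stmt8_sumL2 hXL2 (fun j => γ₁ j - γ₂ j)
  have hs2 : MemLp (fun ω => ∑ j, (δ₁ j - δ₂ j) * X ω j) 2 μ :=
    stmt8_sumL2 hXL2 (fun j => δ₁ j - δ₂ j)
  have I1 : Integrable (fun ω => (A ω - π) ^ 2 * ε₁ ω ^ 2) μ := hWmul hε₁L2.integrable_sq
  have I2 : Integrable (fun ω =>
      2 * ((A ω - π) ^ 2 * (ε₁ ω * ∑ j, (γ₁ j - γ₂ j) * X ω j))) μ :=
    (hWmul (stmt8_mulL2 hε₁L2 hs1)).const_mul 2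
  have I3 : Integrable (fun ω =>
      2 * ((A ω - π) ^ 2 * A ω * (ε₁ ω * ∑ j, (δ₁ j - δ₂ j) * X ω j))) μ :=
    (hWAmul (stmt8_mulL2 hε₁L2 hs2)).const_mul 2
  have I4 : Integrable (fun ω => (A ω - π) ^ 2 *
      ((∑ j, (γ₁ j - γ₂ j) * X ω j) * (∑ k, (γ₁ k - γ₂ k) * X ω k))) μ :=
    hWmul (stmt8_mulL2 hs1 hs1)
  have I5 : Integrable (fun ω => 2 * ((A ω - π) ^ 2 * A ω *
      ((∑ j, (γ₁ j - γ₂ j) * X ω j) * (∑ k, (δ₁ k - δ₂ k) * X ω k)))) μ :=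
    (hWAmul (stmt8_mulL2 hs1 hs2)).const_mul 2
  have I6 : Integrable (fun ω => (A ω - π) ^ 2 * A ω *
      ((∑ j, (δ₁ j - δ₂ j) * X ω j) * (∑ k, (δ₁ k - δ₂ k) * X ω k))) μ :=
    hWAmul (stmt8_mulL2 hs2 hs2)
  -- the values of the five non-trivial integrals
  have J2 : ∫ ω, (A ω - π) ^ 2 * (ε₁ ω * ∑ j, (γ₁ j - γ₂ j) * X ω j) ∂μ = 0 :=
    stmt8_aux_zero hε₁X hwesm hwbd hwε₁X (fun j => γ₁ j - γ₂ j)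
      (fun j hj => by simpa using sub_eq_zero.mpr (hsuppγ j hj))
  have J3 : ∫ ω, (A ω - π) ^ 2 * A ω * (ε₁ ω * ∑ j, (δ₁ j - δ₂ j) * X ω j) ∂μ = 0 :=
    stmt8_aux_zero hε₁X hwAesm hwAbd hwAε₁X (fun j => δ₁ j - δ₂ j)
      (fun j hj => by simpa using sub_eq_zero.mpr (hsuppδ j hj))
  have J4 : ∫ ω, (A ω - π) ^ 2 *
      ((∑ j, (γ₁ j - γ₂ j) * X ω j) * (∑ k, (γ₁ k - γ₂ k) * X ω k)) ∂μ
      = π * (1 - π) * ∑ j, ∑ k, (γ₁ j - γ₂ j) * (S j k * (γ₁ k - γ₂ k)) :=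
    stmt8_aux_quad hXX hwesm hwbd hwXX (fun j => γ₁ j - γ₂ j) (fun k => γ₁ k - γ₂ k)
  have J5 : ∫ ω, (A ω - π) ^ 2 * A ω *
      ((∑ j, (γ₁ j - γ₂ j) * X ω j) * (∑ k, (δ₁ k - δ₂ k) * X ω k)) ∂μ
      = π * (1 - π) ^ 2 * ∑ j, ∑ k, (γ₁ j - γ₂ j) * (S j k * (δ₁ k - δ₂ k)) :=
    stmt8_aux_quad hXX hwAesm hwAbd hwAXX (fun j => γ₁ j - γ₂ j) (fun k => δ₁ k - δ₂ k)
  have J6 : ∫ ω, (A ω - π) ^ 2 * A ω *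
      ((∑ j, (δ₁ j - δ₂ j) * X ω j) * (∑ k, (δ₁ k - δ₂ k) * X ω k)) ∂μ
      = π * (1 - π) ^ 2 * ∑ j, ∑ k, (δ₁ j - δ₂ j) * (S j k * (δ₁ k - δ₂ k)) :=
    stmt8_aux_quad hXX hwAesm hwAbd hwAXX (fun j => δ₁ j - δ₂ j) (fun k => δ₁ k - δ₂ k)
  -- the main variance-difference identity
  have hT : ∫ ω, (A ω - π) ^ 2 * ε₂ ω ^ 2 ∂μ
      = (∫ ω, (A ω - π) ^ 2 * ε₁ ω ^ 2 ∂μ)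
        + π * (1 - π) * (∑ j, ∑ k, (γ₁ j - γ₂ j) * (S j k * (γ₁ k - γ₂ k)))
        + 2 * (π * (1 - π) ^ 2 * ∑ j, ∑ k, (γ₁ j - γ₂ j) * (S j k * (δ₁ k - δ₂ k)))
        + π * (1 - π) ^ 2 * ∑ j, ∑ k, (δ₁ j - δ₂ j) * (S j k * (δ₁ k - δ₂ k)) := by
    have K2 : Integrable (fun ω => (A ω - π) ^ 2 * ε₁ ω ^ 2
        + 2 * ((A ω - π) ^ 2 * (ε₁ ω * ∑ j, (γ₁ j - γ₂ j) * X ω j))) μ := I1.add I2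
    have K3 : Integrable (fun ω => (A ω - π) ^ 2 * ε₁ ω ^ 2
        + 2 * ((A ω - π) ^ 2 * (ε₁ ω * ∑ j, (γ₁ j - γ₂ j) * X ω j))
        + 2 * ((A ω - π) ^ 2 * A ω * (ε₁ ω * ∑ j, (δ₁ j - δ₂ j) * X ω j))) μ := K2.add I3
    have K4 : Integrable (fun ω => (A ω - π) ^ 2 * ε₁ ω ^ 2
        + 2 * ((A ω - π) ^ 2 * (ε₁ ω * ∑ j, (γ₁ j - γ₂ j) * X ω j))
        + 2 * ((A ω - π) ^ 2 * A ω * (ε₁ ω * ∑ j, (δ₁ j - δ₂ j) * X ω j))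
        + (A ω - π) ^ 2 * ((∑ j, (γ₁ j - γ₂ j) * X ω j) * (∑ k, (γ₁ k - γ₂ k) * X ω k))) μ :=
      K3.add I4
    have K5 : Integrable (fun ω => (A ω - π) ^ 2 * ε₁ ω ^ 2
        + 2 * ((A ω - π) ^ 2 * (ε₁ ω * ∑ j, (γ₁ j - γ₂ j) * X ω j))
        + 2 * ((A ω - π) ^ 2 * A ω * (ε₁ ω * ∑ j, (δ₁ j - δ₂ j) * X ω j))
        + (A ω - π) ^ 2 * ((∑ j, (γ₁ j - γ₂ j) * X ω j) * (∑ k, (γ₁ k - γ₂ k) * X ω k))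
        + 2 * ((A ω - π) ^ 2 * A ω *
            ((∑ j, (γ₁ j - γ₂ j) * X ω j) * (∑ k, (δ₁ k - δ₂ k) * X ω k)))) μ := K4.add I5
    rw [integral_congr_ae (Filter.Eventually.of_forall h6),
      integral_add K5 I6,
      integral_add K4 I5,
      integral_add K3 I4,
      integral_add K2 I3,
      integral_add I1 I2,
      integral_const_mul, integral_const_mul, integral_const_mul,
      J2, J3, J4, J5, J6]
    ring
  -- dot product expansion and symmetry
  have hdot : ∀ (u v : Fin p → ℝ), u ⬝ᵥ (S *ᵥ v) = ∑ j, ∑ k, u j * (S j k * v k) := by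
    intro u v; simp [dotProduct, Matrix.mulVec, Finset.mul_sum]
  have hQsym : ∀ u v : Fin p → ℝ,
      (∑ j, ∑ k, u j * (S j k * v k)) = ∑ j, ∑ k, v j * (S j k * u k) := by
    intro u v
    rw [Finset.sum_comm]
    exact Finset.sum_congr rfl fun k _ =>
      Finset.sum_congr rfl fun j _ => by rw [Ssym j k]; ring
  -- the correction-term identity
  have hC : (δ₂ ⬝ᵥ (S *ᵥ ((2 : ℝ) • δf - δ₂))) - (δ₁ ⬝ᵥ (S *ᵥ ((2 : ℝ) • δf - δ₁)))
      = -(∑ j, ∑ k, (δ₁ j - δ₂ j) * (S j k * (δ₁ k - δ₂ k))) := by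
    rw [hdot, hdot]
    have hP2 : (∑ j, ∑ k, 2 * ((δ₁ j - δ₂ j) * (S j k * (δf k - δ₁ k)))) = 0 := by
      refine Finset.sum_eq_zero fun j _ => ?_
      by_cases hj : j ∈ U
      · have h0 := hPb0 j hj
        calc (∑ k, 2 * ((δ₁ j - δ₂ j) * (S j k * (δf k - δ₁ k))))
            = 2 * (δ₁ j - δ₂ j) * ∑ k, S j k * (δf k - δ₁ k) := by
              rw [Finset.mul_sum]
              exact Finset.sum_congr rfl fun k _ => by ring
          _ = 0 := by rw [h0]; ring
      · exact Finset.sum_eq_zero fun k _ => by rw [hsuppδ j hj]; ring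
    calc (∑ j, ∑ k, δ₂ j * (S j k * ((2 : ℝ) • δf - δ₂) k))
          - ∑ j, ∑ k, δ₁ j * (S j k * ((2 : ℝ) • δf - δ₁) k)
        = ∑ j, ∑ k, (δ₂ j * (S j k * ((2 : ℝ) • δf - δ₂) k)
            - δ₁ j * (S j k * ((2 : ℝ) • δf - δ₁) k)) := by
          rw [← Finset.sum_sub_distrib]
          exact Finset.sum_congr rfl fun j _ => (Finset.sum_sub_distrib _ _).symm
      _ = ∑ j, ∑ k, ((δ₁ j * (S j k * (δ₁ k - δ₂ k)) - (δ₁ j - δ₂ j) * (S j k * δ₁ k))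
            - 2 * ((δ₁ j - δ₂ j) * (S j k * (δf k - δ₁ k)))
            - (δ₁ j - δ₂ j) * (S j k * (δ₁ k - δ₂ k))) := by
          refine Finset.sum_congr rfl fun j _ => Finset.sum_congr rfl fun k _ => ?_
          simp only [Pi.sub_apply, Pi.smul_apply, smul_eq_mul]
          ring
      _ = ((∑ j, ∑ k, δ₁ j * (S j k * (δ₁ k - δ₂ k)))
            - ∑ j, ∑ k, (δ₁ j - δ₂ j) * (S j k * δ₁ k))
          - (∑ j, ∑ k, 2 * ((δ₁ j - δ₂ j) * (S j k * (δf k - δ₁ k))))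
          - ∑ j, ∑ k, (δ₁ j - δ₂ j) * (S j k * (δ₁ k - δ₂ k)) := by
          simp only [Finset.sum_sub_distrib]
      _ = -(∑ j, ∑ k, (δ₁ j - δ₂ j) * (S j k * (δ₁ k - δ₂ k))) := by
          rw [hQsym δ₁ (fun k => δ₁ k - δ₂ k), hP2]
          ring
  -- the quadratic-form expansion of the right-hand side
  have hQv : (((γ₁ - γ₂) + (1 - π) • (δ₁ - δ₂)) ⬝ᵥ
        (S *ᵥ ((γ₁ - γ₂) + (1 - π) • (δ₁ - δ₂))))
      = (∑ j, ∑ k, (γ₁ j - γ₂ j) * (S j k * (γ₁ k - γ₂ k)))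
        + 2 * (1 - π) * (∑ j, ∑ k, (γ₁ j - γ₂ j) * (S j k * (δ₁ k - δ₂ k)))
        + (1 - π) ^ 2 * ∑ j, ∑ k, (δ₁ j - δ₂ j) * (S j k * (δ₁ k - δ₂ k)) := by
    rw [hdot]
    calc (∑ j, ∑ k, ((γ₁ - γ₂) + (1 - π) • (δ₁ - δ₂)) j *
          (S j k * ((γ₁ - γ₂) + (1 - π) • (δ₁ - δ₂)) k))
        = ∑ j, ∑ k, ((γ₁ j - γ₂ j) * (S j k * (γ₁ k - γ₂ k))
            + (1 - π) * ((δ₁ j - δ₂ j) * (S j k * (γ₁ k - γ₂ k)))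
            + ((1 - π) * ((γ₁ j - γ₂ j) * (S j k * (δ₁ k - δ₂ k)))
              + (1 - π) ^ 2 * ((δ₁ j - δ₂ j) * (S j k * (δ₁ k - δ₂ k))))) := by
          refine Finset.sum_congr rfl fun j _ => Finset.sum_congr rfl fun k _ => ?_
          simp only [Pi.add_apply, Pi.sub_apply, Pi.smul_apply, smul_eq_mul]
          ring
      _ = (∑ j, ∑ k, (γ₁ j - γ₂ j) * (S j k * (γ₁ k - γ₂ k)))
          + (1 - π) * (∑ j, ∑ k, (δ₁ j - δ₂ j) * (S j k * (γ₁ k - γ₂ k)))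
          + ((1 - π) * (∑ j, ∑ k, (γ₁ j - γ₂ j) * (S j k * (δ₁ k - δ₂ k)))
            + (1 - π) ^ 2 * ∑ j, ∑ k, (δ₁ j - δ₂ j) * (S j k * (δ₁ k - δ₂ k))) := by
          simp only [Finset.sum_add_distrib, ← Finset.mul_sum]
      _ = _ := by
          rw [hQsym (fun j => δ₁ j - δ₂ j) (fun j => γ₁ j - γ₂ j)]
          ring
  -- assemble the equality
  have heq : ((∫ ω, (A ω - π) ^ 2 * ε₂ ω ^ 2 ∂μ) / (π ^ 2 * (1 - π) ^ 2)
        + δ₂ ⬝ᵥ (S *ᵥ ((2 : ℝ) • δf - δ₂)))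
      - ((∫ ω, (A ω - π) ^ 2 * ε₁ ω ^ 2 ∂μ) / (π ^ 2 * (1 - π) ^ 2)
        + δ₁ ⬝ᵥ (S *ᵥ ((2 : ℝ) • δf - δ₁)))
      = (1 / (π * (1 - π))) *
        (((γ₁ - γ₂) + (1 - π) • (δ₁ - δ₂)) ⬝ᵥ
          (S *ᵥ ((γ₁ - γ₂) + (1 - π) • (δ₁ - δ₂)))) := by
    have hne1 : π ≠ 0 := ne_of_gt hπ0
    have hne2 : (1 : ℝ) - π ≠ 0 := ne_of_gt hπ1'
    calc ((∫ ω, (A ω - π) ^ 2 * ε₂ ω ^ 2 ∂μ) / (π ^ 2 * (1 - π) ^ 2)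
          + δ₂ ⬝ᵥ (S *ᵥ ((2 : ℝ) • δf - δ₂)))
        - ((∫ ω, (A ω - π) ^ 2 * ε₁ ω ^ 2 ∂μ) / (π ^ 2 * (1 - π) ^ 2)
          + δ₁ ⬝ᵥ (S *ᵥ ((2 : ℝ) • δf - δ₁)))
        = (π * (1 - π) * (∑ j, ∑ k, (γ₁ j - γ₂ j) * (S j k * (γ₁ k - γ₂ k)))
            + 2 * (π * (1 - π) ^ 2 * ∑ j, ∑ k, (γ₁ j - γ₂ j) * (S j k * (δ₁ k - δ₂ k)))
            + π * (1 - π) ^ 2 * ∑ j, ∑ k, (δ₁ j - δ₂ j) * (S j k * (δ₁ k - δ₂ k)))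
            / (π ^ 2 * (1 - π) ^ 2)
          + ((δ₂ ⬝ᵥ (S *ᵥ ((2 : ℝ) • δf - δ₂))) - (δ₁ ⬝ᵥ (S *ᵥ ((2 : ℝ) • δf - δ₁)))) := by
          rw [hT]; ring
      _ = (π * (1 - π) * (∑ j, ∑ k, (γ₁ j - γ₂ j) * (S j k * (γ₁ k - γ₂ k)))
            + 2 * (π * (1 - π) ^ 2 * ∑ j, ∑ k, (γ₁ j - γ₂ j) * (S j k * (δ₁ k - δ₂ k)))
            + π * (1 - π) ^ 2 * ∑ j, ∑ k, (δ₁ j - δ₂ j) * (S j k * (δ₁ k - δ₂ k)))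
            / (π ^ 2 * (1 - π) ^ 2)
          - ∑ j, ∑ k, (δ₁ j - δ₂ j) * (S j k * (δ₁ k - δ₂ k)) := by
          rw [hC]; ring
      _ = (1 / (π * (1 - π))) *
          ((∑ j, ∑ k, (γ₁ j - γ₂ j) * (S j k * (γ₁ k - γ₂ k)))
            + 2 * (1 - π) * (∑ j, ∑ k, (γ₁ j - γ₂ j) * (S j k * (δ₁ k - δ₂ k)))
            + (1 - π) ^ 2 * ∑ j, ∑ k, (δ₁ j - δ₂ j) * (S j k * (δ₁ k - δ₂ k))) := by
          field_simp
          ring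
      _ = _ := by rw [← hQv]
  refine ⟨heq, ?_⟩
  have hq : 0 ≤ (((γ₁ - γ₂) + (1 - π) • (δ₁ - δ₂)) ⬝ᵥ
      (S *ᵥ ((γ₁ - γ₂) + (1 - π) • (δ₁ - δ₂)))) := by
    have := hSpd.posSemidef.dotProduct_mulVec_nonneg ((γ₁ - γ₂) + (1 - π) • (δ₁ - δ₂))
    simpa using this
  have hcoef : (0:ℝ) ≤ 1 / (π * (1 - π)) := by positivity
  nlinarith [heq, mul_nonneg hcoef hq]
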